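/- Let ρ0 and ρ1 be probability measures on ℝ × ℝ, with first marginals ν0 and ν1 respectively. Assume ν0 is atomless, and assume that for ν0-almost every x, the conditional cumulative distribution function y ↦ F_{0}(y | x) of the second coordinate of ρ0 given first coordinate x is continuous. Let F_0 be the cumulative distribution function of ν0, Q_1 the generalized inverse of the cumulative distribution function of ν1, T_1 = Q_1 ∘ F_0, and for each x' ∈ ℝ let Q_{1}(· | x') be the generalized inverse of the conditional cumulative distribution function of the second coordinate of ρ1 given first coordinate x'. Then the pushforward of ρ0 under the map (x, y) ↦ ( T_1(x), Q_{1}( F_{0}(y | x) | T_1(x) ) ) equals ρ1. -/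

import Mathlib

open MeasureTheory ProbabilityTheory Set

open MeasureTheory ProbabilityTheory Set Filter Topology

namespace KRaux

/-- The uniform probability measure on `(0,1)`. -/
noncomputable def unif : Measure ℝ := volume.restrict (Ioo 0 1)

instance : IsProbabilityMeasure unif :=
  ⟨by simp [unif, Real.volume_Ioo]⟩

/-- Generalized inverse (quantile function) of a Stieltjes function. -/
noncomputable def qsf (F : StieltjesFunction ℝ) (u : ℝ) : ℝ := sInf {y : ℝ | u ≤ F y}

variable {F : StieltjesFunction ℝ}

lemma stieltjes_nonneg (hbot : Tendsto ⇑F atBot (𝓝 0)) (y : ℝ) : 0 ≤ F y :=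
  le_of_tendsto hbot (eventually_atBot.2 ⟨y, fun b hb => F.mono hb⟩)

lemma stieltjes_le_one (htop : Tendsto ⇑F atTop (𝓝 1)) (y : ℝ) : F y ≤ 1 :=
  ge_of_tendsto htop (eventually_atTop.2 ⟨y, fun b hb => F.mono hb⟩)

lemma quantile_le_iff (hbot : Tendsto ⇑F atBot (𝓝 0)) (htop : Tendsto ⇑F atTop (𝓝 1))
    {u : ℝ} (h0 : 0 < u) (h1 : u < 1) (x : ℝ) :
    qsf F u ≤ x ↔ u ≤ F x := by
  have hne : {y : ℝ | u ≤ F y}.Nonempty := by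
    obtain ⟨y, hy⟩ := (htop.eventually_const_lt h1).exists
    exact ⟨y, hy.le⟩
  have hbdd : BddBelow {y : ℝ | u ≤ F y} := by
    obtain ⟨x₀, hx₀⟩ := eventually_atBot.1 (hbot.eventually_lt_const h0)
    refine ⟨x₀, fun y hy => ?_⟩
    by_contra h'
    exact absurd hy (not_le.2 (hx₀ y (le_of_not_ge h')))
  have hmem : u ≤ F (qsf F u) := by
    rw [← F.iInf_Ioi_eq]
    refine le_ciInf fun r => ?_
    obtain ⟨s, hsS, hsr⟩ := exists_lt_of_csInf_lt hne r.2
    exact le_trans hsS (F.mono hsr.le)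
  exact ⟨fun h => le_trans hmem (F.mono h), fun h => csInf_le hbdd h⟩

/-- Measurable version of the quantile function. -/
noncomputable def qg (F : StieltjesFunction ℝ) (u : ℝ) : ℝ :=
  if u ∈ Ioo (0:ℝ) 1 then qsf F u else 0

lemma measurable_qg (hbot : Tendsto ⇑F atBot (𝓝 0)) (htop : Tendsto ⇑F atTop (𝓝 1)) :
    Measurable (qg F) := by
  apply measurable_of_Iic
  intro x
  by_cases hx : (0:ℝ) ≤ x
  · have h : qg F ⁻¹' Iic x = (Ioo 0 1 ∩ Iic (F x)) ∪ (Ioo (0:ℝ) 1)ᶜ := by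
      ext u
      by_cases hu : u ∈ Ioo (0:ℝ) 1
      · simp only [mem_preimage, mem_Iic, qg, if_pos hu, mem_union, mem_inter_iff, hu,
          mem_compl_iff, not_true_eq_false, or_false, true_and]
        exact quantile_le_iff hbot htop hu.1 hu.2 x
      · simp [qg, hu, hx]
    rw [h]
    exact (measurableSet_Ioo.inter measurableSet_Iic).union measurableSet_Ioo.compl
  · have h : qg F ⁻¹' Iic x = Ioo 0 1 ∩ Iic (F x) := by
      ext u
      by_cases hu : u ∈ Ioo (0:ℝ) 1
      · simp only [mem_preimage, mem_Iic, qg, if_pos hu, mem_inter_iff, hu, true_and]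
        exact quantile_le_iff hbot htop hu.1 hu.2 x
      · simp [qg, hu, hx]
    rw [h]
    exact measurableSet_Ioo.inter measurableSet_Iic

lemma qsf_ae_eq (F : StieltjesFunction ℝ) : qsf F =ᵐ[unif] qg F := by
  filter_upwards [ae_restrict_mem (measurableSet_Ioo : MeasurableSet (Ioo (0:ℝ) 1))] with u hu
  simp [qg, hu]

lemma aemeasurable_qsf (hbot : Tendsto ⇑F atBot (𝓝 0)) (htop : Tendsto ⇑F atTop (𝓝 1)) :
    AEMeasurable (qsf F) unif :=
  ⟨qg F, measurable_qg hbot htop, qsf_ae_eq F⟩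

lemma map_qsf (hbot : Tendsto ⇑F atBot (𝓝 0)) (htop : Tendsto ⇑F atTop (𝓝 1)) :
    Measure.map (qsf F) unif = F.measure := by
  rw [Measure.map_congr (qsf_ae_eq F)]
  have hmeas := measurable_qg hbot htop (F := F)
  haveI : IsProbabilityMeasure (Measure.map (qg F) unif) :=
    Measure.isProbabilityMeasure_map hmeas.aemeasurable
  refine Measure.ext_of_Iic _ _ fun x => ?_
  rw [Measure.map_apply hmeas measurableSet_Iic]
  show unif (qg F ⁻¹' Iic x) = F.measure (Iic x)
  rw [unif, Measure.restrict_apply (hmeas measurableSet_Iic),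
    F.measure_Iic hbot, sub_zero]
  have hss : qg F ⁻¹' Iic x ∩ Ioo 0 1 = Ioo 0 1 ∩ Iic (F x) := by
    ext u
    simp only [mem_inter_iff, mem_preimage, mem_Iic]
    constructor
    · rintro ⟨h1, h2⟩
      refine ⟨h2, ?_⟩
      rw [qg, if_pos h2] at h1
      exact (quantile_le_iff hbot htop h2.1 h2.2 x).1 h1
    · rintro ⟨h1, h2⟩
      refine ⟨?_, h1⟩
      rw [qg, if_pos h1]
      exact (quantile_le_iff hbot htop h1.1 h1.2 x).2 h2
  rw [hss]
  rcases lt_or_ge (F x) 1 with h1 | h1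
  · have : Ioo (0:ℝ) 1 ∩ Iic (F x) = Ioc 0 (F x) := by
      ext u
      simp only [mem_inter_iff, mem_Ioo, mem_Iic, mem_Ioc]
      exact ⟨fun h => ⟨h.1.1, h.2⟩, fun h => ⟨⟨h.1, lt_of_le_of_lt h.2 h1⟩, h.2⟩⟩
    rw [this, Real.volume_Ioc, sub_zero]
  · have hFx : F x = 1 := le_antisymm (stieltjes_le_one htop x) h1
    have : Ioo (0:ℝ) 1 ∩ Iic (F x) = Ioo 0 1 := by
      rw [hFx]
      exact inter_eq_left.2 fun u hu => hu.2.le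
    rw [this, Real.volume_Ioo, hFx, sub_zero]

/-- Pushing forward the measure of a continuous Stieltjes cdf by the cdf itself gives the
uniform distribution on `(0,1)`. -/
lemma map_stieltjes (hbot : Tendsto ⇑F atBot (𝓝 0)) (htop : Tendsto ⇑F atTop (𝓝 1))
    (hcont : Continuous ⇑F) :
    Measure.map (⇑F) F.measure = unif := by
  haveI : IsProbabilityMeasure F.measure := F.isProbabilityMeasure hbot htop
  have hm : Measurable ⇑F := F.mono.measurable
  haveI : IsProbabilityMeasure (Measure.map (⇑F) F.measure) :=
    Measure.isProbabilityMeasure_map hm.aemeasurable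
  refine Measure.ext_of_Iic _ _ fun u => ?_
  rw [Measure.map_apply hm measurableSet_Iic]
  show F.measure (⇑F ⁻¹' Iic u) = unif (Iic u)
  rw [unif, Measure.restrict_apply measurableSet_Iic]
  rcases lt_or_ge u 0 with hu0 | hu0
  · have h1 : ⇑F ⁻¹' Iic u = ∅ := by
      refine eq_empty_of_forall_notMem fun y hy => ?_
      exact absurd (mem_preimage.1 hy) (not_le.2 (lt_of_lt_of_le hu0 (stieltjes_nonneg hbot y)))
    have h2 : Iic u ∩ Ioo (0:ℝ) 1 = ∅ := by
      refine eq_empty_of_forall_notMem fun y hy => ?_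
      obtain ⟨hy1, hy2, -⟩ := hy
      exact absurd hy2 (not_lt.2 (lt_of_le_of_lt hy1 hu0).le)
    rw [h1, h2]
    simp
  rcases lt_or_ge u 1 with hu1 | hu1
  · -- 0 ≤ u < 1
    have hIic : Iic u ∩ Ioo (0:ℝ) 1 = Ioc 0 u := by
      ext y
      simp only [mem_inter_iff, mem_Iic, mem_Ioo, mem_Ioc]
      exact ⟨fun h => ⟨h.2.1, h.1⟩, fun h => ⟨h.2, h.1, lt_of_le_of_lt h.2 hu1⟩⟩
    rw [hIic, Real.volume_Ioc, sub_zero]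
    rcases eq_empty_or_nonempty (⇑F ⁻¹' Iic u) with hS | hne
    · have hule : u ≤ 0 := by
        by_contra h'
        push_neg at h'
        obtain ⟨y, hy⟩ := (hbot.eventually_lt_const h').exists
        exact absurd hS (Nonempty.ne_empty ⟨y, hy.le⟩)
      rw [hS]
      simp [ENNReal.ofReal_eq_zero.2 hule]
    · have hbdd : BddAbove (⇑F ⁻¹' Iic u) := by
        obtain ⟨x₀, hx₀⟩ := eventually_atTop.1 (htop.eventually_const_lt hu1)
        refine ⟨x₀, fun y hy => ?_⟩
        by_contra h'
        exact absurd hy (not_le.2 (hx₀ y (le_of_not_ge h')))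
      set m := sSup (⇑F ⁻¹' Iic u) with hm_def
      have hub : ∀ y ∈ ⇑F ⁻¹' Iic u, y ≤ m := fun y hy => le_csSup hbdd hy
      have hle : F m ≤ u := by
        by_contra h'
        push_neg at h'
        obtain ⟨ε, hε, hball⟩ := Metric.eventually_nhds_iff.1
          ((hcont.continuousAt (x := m)).eventually_const_lt h')
        have hub' : ∀ y ∈ ⇑F ⁻¹' Iic u, y ≤ m - ε / 2 := by
          intro y hy
          by_contra h''
          push_neg at h''
          have hdist : dist y m < ε := by
            rw [Real.dist_eq, abs_lt]
            constructor <;> [linarith; linarith [hub y hy]]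
          exact absurd hy (not_le.2 (hball hdist))
        have := csSup_le hne hub'
        rw [← hm_def] at this
        linarith
      have hge : u ≤ F m := by
        by_contra h'
        push_neg at h'
        obtain ⟨ε, hε, hball⟩ := Metric.eventually_nhds_iff.1
          ((hcont.continuousAt (x := m)).eventually_lt_const h')
        have hmem : m + ε / 2 ∈ ⇑F ⁻¹' Iic u := by
          have hdist : dist (m + ε / 2) m < ε := by
            rw [Real.dist_eq, abs_lt]
            constructor <;> linarith
          exact (hball hdist).le
        have := hub _ hmem
        linarith
      have hmu : F m = u := le_antisymm hle hge
      have hsing : F.measure {m} = 0 := by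
        rw [F.measure_singleton]
        have hll : Function.leftLim ⇑F m = F m :=
          F.mono.continuousWithinAt_Iio_iff_leftLim_eq.1 hcont.continuousAt.continuousWithinAt
        rw [hll, sub_self, ENNReal.ofReal_zero]
      by_cases hmem : m ∈ ⇑F ⁻¹' Iic u
      · have hSeq : ⇑F ⁻¹' Iic u = Iic m := by
          refine subset_antisymm (fun y hy => hub y hy) fun y hy => ?_
          rcases lt_or_eq_of_le (mem_Iic.1 hy) with h' | h'
          · obtain ⟨w, hwS, hw⟩ := exists_lt_of_lt_csSup hne h'
            exact le_trans (F.mono hw.le) hwS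
          · rw [h']; exact hmem
        rw [hSeq, F.measure_Iic hbot, sub_zero, hmu]
      · have hSeq : ⇑F ⁻¹' Iic u = Iio m := by
          refine subset_antisymm (fun y hy => ?_) fun y hy => ?_
          · exact lt_of_le_of_ne (hub y hy) fun h => hmem (h ▸ hy)
          · obtain ⟨w, hwS, hw⟩ := exists_lt_of_lt_csSup hne hy
            exact le_trans (F.mono hw.le) hwS
        have hIio : Iio m = Iic m \ {m} := by
          ext y
          simp [lt_iff_le_and_ne]
        rw [hSeq, hIio, measure_diff_null hsing, F.measure_Iic hbot, sub_zero, hmu]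
  · -- 1 ≤ u
    have h1 : ⇑F ⁻¹' Iic u = univ := by
      ext y
      simp only [mem_preimage, mem_Iic, mem_univ, iff_true]
      exact le_trans (stieltjes_le_one htop y) hu1
    have h2 : Iic u ∩ Ioo (0:ℝ) 1 = Ioo 0 1 :=
      inter_eq_right.2 fun y hy => le_trans hy.2.le hu1
    rw [h1, h2, Real.volume_Ioo, measure_univ]
    simp

/-- The cdf of an atomless measure is continuous. -/
lemma continuous_cdf_of_noAtoms (μ : Measure ℝ) [IsProbabilityMeasure μ] [NullSingletonClass μ] :
    Continuous ⇑(cdf μ) := by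
  rw [continuous_iff_continuousAt]
  intro x
  refine (cdf μ).mono.continuousAt_iff_leftLim_eq_rightLim.2 ?_
  rw [(cdf μ).rightLim_eq]
  have h := (cdf μ).measure_singleton x
  rw [measure_cdf, measure_singleton, eq_comm, ENNReal.ofReal_eq_zero] at h
  exact le_antisymm ((cdf μ).mono.leftLim_le le_rfl) (by linarith)

/-- Joint measurability of `condCDF`. -/
lemma measurable_condCDF_prod (ρ : Measure (ℝ × ℝ)) [IsFiniteMeasure ρ] :
    Measurable fun p : ℝ × ℝ => condCDF ρ p.1 p.2 := by
  have hrepr : (fun p : ℝ × ℝ => condCDF ρ p.1 p.2)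
      = fun p : ℝ × ℝ => ⨅ q : ℚ, (if p.2 < (q:ℝ) then condCDF ρ p.1 q else 1) := by
    funext p
    have hbdd : BddBelow (range fun q : ℚ => if p.2 < (q:ℝ) then condCDF ρ p.1 q else 1) := by
      refine ⟨0, fun z hz => ?_⟩
      obtain ⟨q, rfl⟩ := hz
      dsimp only
      split
      · exact condCDF_nonneg ρ p.1 _
      · exact zero_le_one
    haveI : Nonempty {r' : ℚ // p.2 < ↑r'} := by
      obtain ⟨q, hq⟩ := exists_rat_gt p.2
      exact ⟨⟨q, hq⟩⟩
    refine le_antisymm (le_ciInf fun q => ?_) ?_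
    · split_ifs with h
      · exact (condCDF ρ p.1).mono h.le
      · exact condCDF_le_one ρ p.1 _
    · rw [← (condCDF ρ p.1).iInf_rat_gt_eq p.2]
      refine le_ciInf fun r => ?_
      refine ciInf_le_of_le hbdd (r : ℚ) ?_
      rw [if_pos r.2]
  rw [hrepr]
  exact Measurable.iInf fun q =>
    Measurable.ite (measurableSet_lt measurable_snd measurable_const)
      ((measurable_condCDF ρ q).comp measurable_fst) measurable_const

/-- The conditional kernel built from `condCDF`. -/
noncomputable def ker (ρ : Measure (ℝ × ℝ)) : Kernel ℝ ℝ :=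
  ⟨fun a => (condCDF ρ a).measure, measurable_measure_condCDF ρ⟩

lemma ker_apply (ρ : Measure (ℝ × ℝ)) (a : ℝ) : ker ρ a = (condCDF ρ a).measure := rfl

instance (ρ : Measure (ℝ × ℝ)) : IsMarkovKernel (ker ρ) :=
  ⟨fun a => by rw [ker_apply]; infer_instance⟩

lemma compProd_ker (ρ : Measure (ℝ × ℝ)) [IsFiniteMeasure ρ] :
    ρ.fst ⊗ₘ ker ρ = ρ := by
  have h := compProd_toKernel (isCondKernelCDF_condCDF ρ)
  have hk : Kernel.prodMkLeft Unit (ker ρ)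
      = (isCondKernelCDF_condCDF ρ).toKernel (fun p : Unit × ℝ => condCDF ρ p.2) := by
    ext p : 1
    rw [Kernel.prodMkLeft_apply, IsCondKernelCDF.toKernel_apply, ker_apply]
  calc ρ.fst ⊗ₘ ker ρ
      = (Kernel.const Unit ρ.fst ⊗ₖ Kernel.prodMkLeft Unit (ker ρ)) () := rfl
    _ = (Kernel.const Unit ρ.fst ⊗ₖ
        (isCondKernelCDF_condCDF ρ).toKernel (fun p : Unit × ℝ => condCDF ρ p.2)) () := by
        rw [hk]
    _ = Kernel.const Unit ρ () := by rw [h]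
    _ = ρ := rfl

end KRaux

open KRaux

/-- Two-dimensional Knothe–Rosenblatt rearrangement: if the first marginal of `ρ0` is
atomless and the conditional cdfs of `ρ0` are a.e. continuous, then the lower triangular
map whose first component is the monotone transport `T1 = Q1 ∘ F0` between first marginals
and whose second component is the monotone transport between the corresponding conditional
distributions pushes `ρ0` forward to `ρ1`. -/
theorem stmt_17 (ρ0 ρ1 : Measure (ℝ × ℝ))
    [IsProbabilityMeasure ρ0] [IsProbabilityMeasure ρ1]
    [NullSingletonClass ρ0.fst]
    (hcont : ∀ᵐ x ∂ρ0.fst, Continuous (fun y => condCDF ρ0 x y))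
    (F0 : ℝ → ℝ) (hF0 : ∀ x, F0 x = (ρ0.fst (Iic x)).toReal)
    (F1 : ℝ → ℝ) (hF1 : ∀ x, F1 x = (ρ1.fst (Iic x)).toReal)
    (Q1 : ℝ → ℝ) (hQ1 : ∀ u, Q1 u = sInf {x : ℝ | u ≤ F1 x})
    (T1 : ℝ → ℝ) (hT1 : ∀ x, T1 x = Q1 (F0 x))
    (Q1cond : ℝ → ℝ → ℝ)
    (hQ1cond : ∀ x' u, Q1cond x' u = sInf {y : ℝ | u ≤ condCDF ρ1 x' y}) :
    Measure.map
        (fun p : ℝ × ℝ => (T1 p.1, Q1cond (T1 p.1) (condCDF ρ0 p.1 p.2))) ρ0 = ρ1 := by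
  have hF0' : F0 = ⇑(cdf ρ0.fst) := funext fun x => by rw [hF0 x, cdf_eq_real, measureReal_def]
  have hF1' : F1 = ⇑(cdf ρ1.fst) := funext fun x => by rw [hF1 x, cdf_eq_real, measureReal_def]
  have hQ1' : Q1 = qsf (cdf ρ1.fst) := funext fun u => by rw [hQ1 u, hF1']; rfl
  have hT1' : T1 = fun x => qsf (cdf ρ1.fst) (cdf ρ0.fst x) := funext fun x => by
    rw [hT1 x, hQ1', hF0']
  have hQc : ∀ x', Q1cond x' = qsf (condCDF ρ1 x') := fun x' => funext fun u => hQ1cond x' u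
  have hcont0 : Continuous ⇑(cdf ρ0.fst) := continuous_cdf_of_noAtoms ρ0.fst
  have hmapF0 : Measure.map (⇑(cdf ρ0.fst)) ρ0.fst = unif := by
    have h := map_stieltjes (F := cdf ρ0.fst) (tendsto_cdf_atBot _) (tendsto_cdf_atTop _) hcont0
    rwa [measure_cdf] at h
  have hq1ae : AEMeasurable (qsf (cdf ρ1.fst)) (Measure.map (⇑(cdf ρ0.fst)) ρ0.fst) := by
    rw [hmapF0]; exact aemeasurable_qsf (tendsto_cdf_atBot _) (tendsto_cdf_atTop _)
  have hT1ae : AEMeasurable T1 ρ0.fst := by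
    rw [hT1']
    exact hq1ae.comp_aemeasurable hcont0.measurable.aemeasurable
  have hmapT1 : Measure.map T1 ρ0.fst = ρ1.fst := by
    rw [hT1']
    have h2 : (fun x => qsf (cdf ρ1.fst) (cdf ρ0.fst x)) = qsf (cdf ρ1.fst) ∘ ⇑(cdf ρ0.fst) := rfl
    rw [h2, ← AEMeasurable.map_map_of_aemeasurable hq1ae hcont0.measurable.aemeasurable, hmapF0,
      map_qsf (tendsto_cdf_atBot _) (tendsto_cdf_atTop _), measure_cdf]
  have hdis0 := compProd_ker ρ0
  have hdis1 := compProd_ker ρ1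
  have hC : Measurable fun p : ℝ × ℝ => condCDF ρ0 p.1 p.2 := measurable_condCDF_prod ρ0
  set T1' := hT1ae.mk T1 with hT1'def
  have hT1'meas : Measurable T1' := hT1ae.measurable_mk
  have hT1'ae : T1 =ᵐ[ρ0.fst] T1' := hT1ae.ae_eq_mk
  set G : ℝ × ℝ → ℝ := fun q => if q.2 ∈ Ioo (0:ℝ) 1 then qsf (condCDF ρ1 q.1) q.2 else 0
    with hGdef
  have hGmeas : Measurable G := by
    apply measurable_of_Iic
    intro y
    have hA : MeasurableSet {q : ℝ × ℝ | q.2 ∈ Ioo (0:ℝ) 1 ∧ q.2 ≤ condCDF ρ1 q.1 y} := by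
      refine ((measurable_snd measurableSet_Ioo)).inter ?_
      exact measurableSet_le measurable_snd ((measurable_condCDF ρ1 y).comp measurable_fst)
    by_cases hy : (0:ℝ) ≤ y
    · have h : G ⁻¹' Iic y = {q : ℝ × ℝ | q.2 ∈ Ioo (0:ℝ) 1 ∧ q.2 ≤ condCDF ρ1 q.1 y}
          ∪ {q : ℝ × ℝ | q.2 ∈ Ioo (0:ℝ) 1}ᶜ := by
        ext q
        by_cases hq : q.2 ∈ Ioo (0:ℝ) 1
        · simp only [mem_preimage, mem_Iic, hGdef, if_pos hq, mem_union, mem_setOf_eq, hq,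
            true_and, mem_compl_iff, not_true_eq_false, or_false]
          exact quantile_le_iff (tendsto_condCDF_atBot ρ1 q.1) (tendsto_condCDF_atTop ρ1 q.1)
            hq.1 hq.2 y
        · simp only [mem_preimage, mem_Iic, hGdef, mem_union, mem_setOf_eq, mem_compl_iff]
          rw [if_neg hq]
          simp [hq, hy]
      rw [h]
      exact hA.union ((measurable_snd measurableSet_Ioo)).compl
    · have h : G ⁻¹' Iic y = {q : ℝ × ℝ | q.2 ∈ Ioo (0:ℝ) 1 ∧ q.2 ≤ condCDF ρ1 q.1 y} := by
        ext q
        by_cases hq : q.2 ∈ Ioo (0:ℝ) 1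
        · simp only [mem_preimage, mem_Iic, hGdef, if_pos hq, mem_setOf_eq, hq, true_and]
          exact quantile_le_iff (tendsto_condCDF_atBot ρ1 q.1) (tendsto_condCDF_atTop ρ1 q.1)
            hq.1 hq.2 y
        · simp only [mem_preimage, mem_Iic, hGdef, mem_setOf_eq]
          rw [if_neg hq]
          simp [hq, hy]
      rw [h]
      exact hA
  set f' : ℝ × ℝ → ℝ × ℝ := fun p => (T1' p.1, G (T1' p.1, condCDF ρ0 p.1 p.2)) with hf'def
  have hf'meas : Measurable f' :=
    (hT1'meas.comp measurable_fst).prodMk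
      (hGmeas.comp ((hT1'meas.comp measurable_fst).prodMk hC))
  have hfst_eq : ρ0.map Prod.fst = ρ0.fst := rfl
  have haefst : ∀ᵐ p : ℝ × ℝ ∂ρ0, T1 p.1 = T1' p.1 := by
    have h : Tendsto Prod.fst (ae ρ0) (ae ρ0.fst) := by
      rw [← hfst_eq]
      exact Measure.tendsto_ae_map measurable_fst.aemeasurable
    exact h.eventually hT1'ae
  have haeIoo : ∀ᵐ p : ℝ × ℝ ∂ρ0, condCDF ρ0 p.1 p.2 ∈ Ioo (0:ℝ) 1 := by
    have key : ∀ᵐ p : ℝ × ℝ ∂(ρ0.fst ⊗ₘ ker ρ0), condCDF ρ0 p.1 p.2 ∈ Ioo (0:ℝ) 1 := by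
      rw [Measure.ae_compProd_iff (hC measurableSet_Ioo)]
      filter_upwards [hcont] with x hx
      have hmapx : Measure.map (⇑(condCDF ρ0 x)) ((condCDF ρ0 x).measure) = unif :=
        map_stieltjes (tendsto_condCDF_atBot ρ0 x) (tendsto_condCDF_atTop ρ0 x) hx
      have hu : ∀ᵐ u ∂unif, u ∈ Ioo (0:ℝ) 1 := ae_restrict_mem measurableSet_Ioo
      rw [← hmapx] at hu
      exact (Measure.tendsto_ae_map
        (condCDF ρ0 x).mono.measurable.aemeasurable).eventually hu
    rwa [hdis0] at key
  have hfeq : (fun p : ℝ × ℝ => (T1 p.1, Q1cond (T1 p.1) (condCDF ρ0 p.1 p.2))) =ᵐ[ρ0] f' := by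
    filter_upwards [haefst, haeIoo] with p hp1 hp2
    simp only [hf'def]
    rw [← hp1]
    have hG : G (T1 p.1, condCDF ρ0 p.1 p.2)
        = qsf (condCDF ρ1 (T1 p.1)) (condCDF ρ0 p.1 p.2) := by
      simp only [hGdef]
      rw [if_pos hp2]
    rw [hG, hQc]
  rw [Measure.map_congr hfeq]
  ext s hs
  rw [Measure.map_apply hf'meas hs]
  conv_lhs => rw [← hdis0]
  rw [Measure.compProd_apply (hf'meas hs)]
  conv_rhs => rw [← hdis1]
  rw [Measure.compProd_apply hs, ← hmapT1,
    lintegral_map' (Kernel.measurable_kernel_prodMk_left hs).aemeasurable hT1ae]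
  refine lintegral_congr_ae ?_
  filter_upwards [hcont, hT1'ae] with x hx hxT
  have hmapx : Measure.map (⇑(condCDF ρ0 x)) ((condCDF ρ0 x).measure) = unif :=
    map_stieltjes (tendsto_condCDF_atBot ρ0 x) (tendsto_condCDF_atTop ρ0 x) hx
  have hxIoo : ∀ᵐ y ∂((condCDF ρ0 x).measure), condCDF ρ0 x y ∈ Ioo (0:ℝ) 1 := by
    have hu : ∀ᵐ u ∂unif, u ∈ Ioo (0:ℝ) 1 := ae_restrict_mem measurableSet_Ioo
    rw [← hmapx] at hu
    exact (Measure.tendsto_ae_map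
      (condCDF ρ0 x).mono.measurable.aemeasurable).eventually hu
  have hq'ae : AEMeasurable (qsf (condCDF ρ1 (T1 x)))
      (Measure.map (⇑(condCDF ρ0 x)) ((condCDF ρ0 x).measure)) := by
    rw [hmapx]
    exact aemeasurable_qsf (tendsto_condCDF_atBot ρ1 (T1 x)) (tendsto_condCDF_atTop ρ1 (T1 x))
  have hclaim1 : (Prod.mk x ⁻¹' (f' ⁻¹' s) : Set ℝ) =ᵐ[(condCDF ρ0 x).measure]
      ((fun y => qsf (condCDF ρ1 (T1 x)) (condCDF ρ0 x y)) ⁻¹' (Prod.mk (T1 x) ⁻¹' s)) := by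
    rw [Filter.eventuallyEq_set]
    filter_upwards [hxIoo] with y hy
    simp only [mem_preimage, hf'def]
    rw [← hxT]
    have hG : G (T1 x, condCDF ρ0 x y) = qsf (condCDF ρ1 (T1 x)) (condCDF ρ0 x y) := by
      simp only [hGdef]
      rw [if_pos hy]
    rw [hG]
  show (condCDF ρ0 x).measure _ = (condCDF ρ1 (T1 x)).measure _
  rw [measure_congr hclaim1]
  have hcomp : AEMeasurable (fun y => qsf (condCDF ρ1 (T1 x)) (condCDF ρ0 x y))
      ((condCDF ρ0 x).measure) :=
    hq'ae.comp_aemeasurable (condCDF ρ0 x).mono.measurable.aemeasurable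
  rw [← Measure.map_apply_of_aemeasurable hcomp (measurable_prodMk_left hs)]
  have hfinal : Measure.map (fun y => qsf (condCDF ρ1 (T1 x)) (condCDF ρ0 x y))
      ((condCDF ρ0 x).measure) = (condCDF ρ1 (T1 x)).measure := by
    have h1 : (fun y => qsf (condCDF ρ1 (T1 x)) (condCDF ρ0 x y))
        = qsf (condCDF ρ1 (T1 x)) ∘ ⇑(condCDF ρ0 x) := rfl
    rw [h1, ← AEMeasurable.map_map_of_aemeasurable hq'ae
      (condCDF ρ0 x).mono.measurable.aemeasurable, hmapx,
      map_qsf (tendsto_condCDF_atBot ρ1 (T1 x)) (tendsto_condCDF_atTop ρ1 (T1 x))]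
  rw [hfinal]
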